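/- Let m ≥ 1 and let Z be an m×m matrix of natural numbers that is transitive (Z_{ij} ≥ 1 and Z_{jk} ≥ 1 imply Z_{ik} ≥ 1) and whose diagonal entries all satisfy Z_{ii} ≥ 2. Then Z is the matrix of a category: there exists a category structure on the set of objects {1, …, m} with finite hom-sets such that for all i, j the number of arrows from i to j equals Z_{ij}. -/

import Mathlib

open CategoryTheory

def myComp (m : ℕ) (Z : Matrix (Fin m) (Fin m) ℕ)
    (htrans : ∀ i j k : Fin m, 1 ≤ Z i j → 1 ≤ Z j k → 1 ≤ Z i k)
    {i j k : Fin m} (f : Fin (Z i j)) (g : Fin (Z j k)) : Fin (Z i k) :=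
  if h : i = j ∧ f.val = 1 then Fin.cast (by rw [h.1]) g
  else if h' : j = k ∧ g.val = 1 then Fin.cast (by rw [h'.1]) f
  else ⟨0, htrans i j k f.pos g.pos⟩

lemma myComp_val (m : ℕ) (Z : Matrix (Fin m) (Fin m) ℕ)
    (htrans : ∀ i j k : Fin m, 1 ≤ Z i j → 1 ≤ Z j k → 1 ≤ Z i k)
    {i j k : Fin m} (f : Fin (Z i j)) (g : Fin (Z j k)) :
    (myComp m Z htrans f g).val =
      if i = j ∧ f.val = 1 then g.val
      else if j = k ∧ g.val = 1 then f.val else 0 := by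
  unfold myComp
  split_ifs <;> simp

theorem stmt16 (m : ℕ) (hm : 1 ≤ m) (Z : Matrix (Fin m) (Fin m) ℕ)
    (htrans : ∀ i j k : Fin m, 1 ≤ Z i j → 1 ≤ Z j k → 1 ≤ Z i k)
    (hdiag : ∀ i : Fin m, 2 ≤ Z i i) :
    ∃ inst : Category.{0} (Fin m),
      ∀ i j : Fin m,
        Finite (@Quiver.Hom (Fin m) inst.toCategoryStruct.toQuiver i j) ∧
        Nat.card (@Quiver.Hom (Fin m) inst.toCategoryStruct.toQuiver i j) = Z i j := by
  refine ⟨{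
    Hom := fun i j => Fin (Z i j)
    id := fun i => ⟨1, hdiag i⟩
    comp := fun {i j k} f g => myComp m Z htrans f g
    id_comp := ?_
    comp_id := ?_
    assoc := ?_ }, ?_⟩
  · intro i j f
    show myComp m Z htrans ⟨1, hdiag i⟩ f = f
    apply Fin.ext
    rw [myComp_val]
    simp
  · intro i j f
    show myComp m Z htrans f ⟨1, hdiag j⟩ = f
    apply Fin.ext
    rw [myComp_val]
    split_ifs with h1 h2 <;> simp_all
  · intro i j k l f g h
    show myComp m Z htrans (myComp m Z htrans f g) h = myComp m Z htrans f (myComp m Z htrans g h)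
    apply Fin.ext
    simp only [myComp_val]
    by_cases hij : i = j <;> by_cases hjk : j = k <;> by_cases hkl : k = l <;>
      try subst hij <;> try subst hjk <;> try subst hkl
    all_goals (try subst hij) <;> (try subst hjk) <;> (try subst hkl) <;>
      split_ifs <;> simp_all <;> omega
  · intro i j
    refine ⟨by show Finite (Fin (Z i j)); infer_instance, ?_⟩
    show Nat.card (Fin (Z i j)) = Z i j
    simp [Nat.card_eq_fintype_card]
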